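/- Let γ ∈ (0,1], σ > 3 and α ∈ [0,1/2) with σ − α > 3. There exists a constant C > 0, depending only on γ, σ and α, such that for every z ≥ 0, every t ≥ 0, and all functions a, b : ℤ³ → ℂ with a(0) = b(0) = 0 for which M_a := sup_{ℓ ∈ ℤ³, ℓ ≠ 0} exp(z⟨ℓ,ℓt⟩^γ)·⟨ℓ,ℓt⟩^σ·|ℓ|^{−α}·|a(ℓ)| and M_b := sup_{ℓ ∈ ℤ³, ℓ ≠ 0} exp(z⟨ℓ,ℓt⟩^γ)·⟨ℓ,ℓt⟩^σ·|ℓ|^{−α}·|b(ℓ)| are both finite, the convolution c(k) := ∑_{ℓ ∈ ℤ³} a(ℓ)·b(k−ℓ) converges absolutely for every k ∈ ℤ³ and satisfies sup_{k ∈ ℤ³, k ≠ 0} exp(z⟨k,kt⟩^γ)·⟨k,kt⟩^σ·|k|^{−α}·|c(k)| ≤ C·M_a·M_b. -/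

import Mathlib

/-- Euclidean norm of a lattice point `k ∈ ℤ³`, viewed as a vector of `ℝ³`. -/
noncomputable def knorm (k : Fin 3 → ℤ) : ℝ := Real.sqrt (∑ i, ((k i : ℝ)) ^ 2)

/-- Japanese bracket `⟨k, kt⟩ = √(1 + |k|² + |kt|²)`. -/
noncomputable def jb (k : Fin 3 → ℤ) (t : ℝ) : ℝ :=
  Real.sqrt (1 + (∑ i, ((k i : ℝ)) ^ 2) + (∑ i, (t * (k i : ℝ)) ^ 2))

/-- The weight `exp(z⟨k,kt⟩^γ)·⟨k,kt⟩^σ·|k|^{-α}` of the generator function `F`. -/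
noncomputable def W (γ σ α z t : ℝ) (k : Fin 3 → ℤ) : ℝ :=
  Real.exp (z * jb k t ^ γ) * jb k t ^ σ * knorm k ^ (-α)

namespace ConvAux

def Q (k : Fin 3 → ℤ) : ℝ := ∑ i, ((k i : ℝ)) ^ 2

lemma Q_nonneg (k : Fin 3 → ℤ) : 0 ≤ Q k := Finset.sum_nonneg fun _ _ => sq_nonneg _

lemma knorm_eq (k : Fin 3 → ℤ) : knorm k = Real.sqrt (Q k) := rfl

lemma knorm_nonneg (k : Fin 3 → ℤ) : 0 ≤ knorm k := Real.sqrt_nonneg _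

lemma knorm_sq (k : Fin 3 → ℤ) : knorm k ^ 2 = Q k := Real.sq_sqrt (Q_nonneg k)

lemma one_le_Q {k : Fin 3 → ℤ} (hk : k ≠ 0) : 1 ≤ Q k := by
  obtain ⟨i, hi⟩ : ∃ i, k i ≠ 0 := by
    by_contra h; push_neg at h; exact hk (funext h)
  have h1 : (1:ℝ) ≤ ((k i : ℝ)) ^ 2 := by
    have h2 : 1 ≤ |k i| := Int.one_le_abs hi
    have h3 : (1:ℝ) ≤ |(k i : ℝ)| := by rw [← Int.cast_abs]; exact_mod_cast h2
    nlinarith [sq_abs ((k i : ℝ))]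
  calc (1:ℝ) ≤ ((k i : ℝ)) ^ 2 := h1
    _ ≤ Q k := by unfold Q; exact Finset.single_le_sum (fun j _ => sq_nonneg ((k j : ℝ))) (Finset.mem_univ i)

lemma one_le_knorm {k : Fin 3 → ℤ} (hk : k ≠ 0) : 1 ≤ knorm k := by
  rw [knorm_eq]
  calc (1:ℝ) = Real.sqrt 1 := Real.sqrt_one.symm
    _ ≤ Real.sqrt (Q k) := Real.sqrt_le_sqrt (one_le_Q hk)

lemma knorm_pos {k : Fin 3 → ℤ} (hk : k ≠ 0) : 0 < knorm k :=
  lt_of_lt_of_le one_pos (one_le_knorm hk)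

lemma jb_eq (k : Fin 3 → ℤ) (t : ℝ) : jb k t = Real.sqrt (1 + (1 + t ^ 2) * Q k) := by
  unfold jb
  congr 1
  have h : ∑ i, (t * (k i : ℝ)) ^ 2 = t ^ 2 * Q k := by
    simp only [Q, Finset.mul_sum, mul_pow]
  rw [h]; unfold Q; ring

lemma one_le_jb (k : Fin 3 → ℤ) (t : ℝ) : 1 ≤ jb k t := by
  rw [jb_eq]
  calc (1:ℝ) = Real.sqrt 1 := Real.sqrt_one.symm
    _ ≤ _ := Real.sqrt_le_sqrt (by nlinarith [Q_nonneg k, sq_nonneg t])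

lemma jb_pos (k : Fin 3 → ℤ) (t : ℝ) : 0 < jb k t :=
  lt_of_lt_of_le one_pos (one_le_jb k t)

lemma knorm_le_jb (k : Fin 3 → ℤ) (t : ℝ) : knorm k ≤ jb k t := by
  rw [knorm_eq, jb_eq]
  refine Real.sqrt_le_sqrt ?_
  nlinarith [Q_nonneg k, sq_nonneg t]

lemma sqrt_mul_knorm_le_jb (k : Fin 3 → ℤ) (t : ℝ) :
    Real.sqrt (1 + t ^ 2) * knorm k ≤ jb k t := by
  rw [knorm_eq, jb_eq, ← Real.sqrt_mul (by positivity)]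
  refine Real.sqrt_le_sqrt ?_
  linarith

lemma jb_le_sqrt_mul_knorm {k : Fin 3 → ℤ} (hk : k ≠ 0) (t : ℝ) :
    jb k t ≤ Real.sqrt (2 + t ^ 2) * knorm k := by
  rw [knorm_eq, jb_eq, ← Real.sqrt_mul (by positivity)]
  refine Real.sqrt_le_sqrt ?_
  have h := one_le_Q hk
  nlinarith [sq_nonneg t]

lemma jb_zero_le (k : Fin 3 → ℤ) (t : ℝ) : Real.sqrt (1 + Q k) ≤ jb k t := by
  rw [jb_eq]
  refine Real.sqrt_le_sqrt ?_
  nlinarith [Q_nonneg k, sq_nonneg t]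

noncomputable def vE (k : Fin 3 → ℤ) : EuclideanSpace ℝ (Fin 3) := WithLp.toLp 2 (fun i => (k i : ℝ))

lemma knorm_eq_norm (k : Fin 3 → ℤ) : knorm k = ‖vE k‖ := by
  rw [EuclideanSpace.norm_eq]
  unfold knorm
  congr 1
  refine Finset.sum_congr rfl fun i _ => ?_
  rw [Real.norm_eq_abs, sq_abs]
  rfl

lemma knorm_triangle (ℓ m : Fin 3 → ℤ) : knorm (ℓ + m) ≤ knorm ℓ + knorm m := by
  rw [knorm_eq_norm, knorm_eq_norm, knorm_eq_norm]
  have h : vE (ℓ + m) = vE ℓ + vE m := by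
    ext i
    show ((ℓ i + m i : ℤ) : ℝ) = (ℓ i : ℝ) + (m i : ℝ)
    push_cast; ring
  rw [h]
  exact norm_add_le _ _

lemma sqrt_one_add_sq_subadd {c x y : ℝ} (hc : 0 ≤ c) (hx : 0 ≤ x) (hy : 0 ≤ y) :
    Real.sqrt (1 + c * (x + y) ^ 2) ≤ Real.sqrt (1 + c * x ^ 2) + Real.sqrt (1 + c * y ^ 2) := by
  set u := Real.sqrt (1 + c * x ^ 2) with hu_def
  set w := Real.sqrt (1 + c * y ^ 2) with hw_def
  have hu : 0 ≤ u := Real.sqrt_nonneg _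
  have hw : 0 ≤ w := Real.sqrt_nonneg _
  have hu2 : u ^ 2 = 1 + c * x ^ 2 := Real.sq_sqrt (by positivity)
  have hw2 : w ^ 2 = 1 + c * y ^ 2 := Real.sq_sqrt (by positivity)
  have hsc : Real.sqrt c ^ 2 = c := Real.sq_sqrt hc
  have hcu : Real.sqrt c * x ≤ u := by
    rw [hu_def, show Real.sqrt c * x = Real.sqrt (c * x ^ 2) by
      rw [Real.sqrt_mul hc, Real.sqrt_sq hx]]
    exact Real.sqrt_le_sqrt (by linarith)
  have hcw : Real.sqrt c * y ≤ w := by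
    rw [hw_def, show Real.sqrt c * y = Real.sqrt (c * y ^ 2) by
      rw [Real.sqrt_mul hc, Real.sqrt_sq hy]]
    exact Real.sqrt_le_sqrt (by linarith)
  have hprod : (Real.sqrt c * x) * (Real.sqrt c * y) ≤ u * w :=
    mul_le_mul hcu hcw (by positivity) hu
  have key : 1 + c * (x + y) ^ 2 ≤ (u + w) ^ 2 := by nlinarith
  calc Real.sqrt (1 + c * (x + y) ^ 2) ≤ Real.sqrt ((u + w) ^ 2) := Real.sqrt_le_sqrt key
    _ = u + w := Real.sqrt_sq (by positivity)

lemma jb_triangle (ℓ m : Fin 3 → ℤ) (t : ℝ) : jb (ℓ + m) t ≤ jb ℓ t + jb m t := by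
  rw [jb_eq, jb_eq, jb_eq]
  have hc : (0:ℝ) ≤ 1 + t ^ 2 := by positivity
  have h1 : Q (ℓ + m) ≤ (knorm ℓ + knorm m) ^ 2 := by
    rw [← knorm_sq]
    exact pow_le_pow_left₀ (knorm_nonneg _) (knorm_triangle ℓ m) 2
  calc Real.sqrt (1 + (1 + t ^ 2) * Q (ℓ + m))
      ≤ Real.sqrt (1 + (1 + t ^ 2) * (knorm ℓ + knorm m) ^ 2) := by
        refine Real.sqrt_le_sqrt ?_
        nlinarith
    _ ≤ Real.sqrt (1 + (1 + t ^ 2) * knorm ℓ ^ 2) + Real.sqrt (1 + (1 + t ^ 2) * knorm m ^ 2) :=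
        sqrt_one_add_sq_subadd hc (knorm_nonneg _) (knorm_nonneg _)
    _ = Real.sqrt (1 + (1 + t ^ 2) * Q ℓ) + Real.sqrt (1 + (1 + t ^ 2) * Q m) := by
        rw [knorm_sq, knorm_sq]

lemma rpow_subadd {x y p : ℝ} (hx : 0 ≤ x) (hy : 0 ≤ y) (hp : 0 ≤ p) (hp1 : p ≤ 1) :
    (x + y) ^ p ≤ x ^ p + y ^ p := by
  have h := NNReal.rpow_add_le_add_rpow x.toNNReal y.toNNReal hp hp1
  have h2 := NNReal.coe_le_coe.mpr h
  push_cast [NNReal.coe_rpow] at h2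
  rwa [Real.coe_toNNReal x hx, Real.coe_toNNReal y hy] at h2

end ConvAux

namespace ConvAux

open Real

lemma W_pos {γ σ α z t : ℝ} {k : Fin 3 → ℤ} (hk : k ≠ 0) : 0 < W γ σ α z t k := by
  unfold W
  have h1 := jb_pos k t
  have h2 := knorm_pos hk
  positivity

lemma power_bound {σ α t : ℝ} (hα0 : 0 ≤ α) (hα1 : α ≤ 1) (hασ : α ≤ σ)
    {k ℓ : Fin 3 → ℤ} (hk : k ≠ 0) (hl : ℓ ≠ 0) (hkl : jb k t ≤ 2 * jb ℓ t) :
    jb k t ^ σ * knorm k ^ (-α) ≤ 2 ^ (σ + 1) * (jb ℓ t ^ σ * knorm ℓ ^ (-α)) := by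
  have hJk := jb_pos k t
  have hJl := jb_pos ℓ t
  have hNk := knorm_pos hk
  have hNl := knorm_pos hl
  have hB : (0:ℝ) < Real.sqrt (1 + t ^ 2) := Real.sqrt_pos.mpr (by positivity)
  have hA : (0:ℝ) ≤ Real.sqrt (2 + t ^ 2) := Real.sqrt_nonneg _
  -- F2
  have hNkk : knorm k ^ α * knorm k ^ (-α) = 1 := by
    rw [← Real.rpow_add hNk]; simp
  have F2 : jb k t ^ α * knorm k ^ (-α) ≤ Real.sqrt (2 + t ^ 2) ^ α := by
    have h1 : jb k t ^ α ≤ (Real.sqrt (2 + t ^ 2) * knorm k) ^ α :=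
      Real.rpow_le_rpow hJk.le (jb_le_sqrt_mul_knorm hk t) hα0
    have h2 : (Real.sqrt (2 + t ^ 2) * knorm k) ^ α
        = Real.sqrt (2 + t ^ 2) ^ α * knorm k ^ α := Real.mul_rpow hA hNk.le
    calc jb k t ^ α * knorm k ^ (-α)
        ≤ (Real.sqrt (2 + t ^ 2) ^ α * knorm k ^ α) * knorm k ^ (-α) := by
          rw [← h2]
          exact mul_le_mul_of_nonneg_right h1 (Real.rpow_nonneg hNk.le _)
      _ = Real.sqrt (2 + t ^ 2) ^ α := by rw [mul_assoc, hNkk, mul_one]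
  -- F1
  have F1 : jb k t ^ (σ - α) ≤ 2 ^ (σ - α) * jb ℓ t ^ (σ - α) := by
    have h1 : jb k t ^ (σ - α) ≤ (2 * jb ℓ t) ^ (σ - α) :=
      Real.rpow_le_rpow hJk.le hkl (by linarith)
    rwa [Real.mul_rpow (by norm_num) hJl.le] at h1
  -- F3
  have F3 : jb ℓ t ^ (-α) ≤ Real.sqrt (1 + t ^ 2) ^ (-α) * knorm ℓ ^ (-α) := by
    have h1 : (Real.sqrt (1 + t ^ 2) * knorm ℓ) ^ (-α) ≥ jb ℓ t ^ (-α) :=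
      Real.rpow_le_rpow_of_nonpos (by positivity) (sqrt_mul_knorm_le_jb ℓ t)
        (neg_nonpos.mpr hα0)
    rwa [Real.mul_rpow hB.le hNl.le] at h1
  -- Const
  have hConst : Real.sqrt (2 + t ^ 2) ^ α * Real.sqrt (1 + t ^ 2) ^ (-α) ≤ 2 := by
    have hdiv : Real.sqrt (2 + t ^ 2) / Real.sqrt (1 + t ^ 2) ≤ Real.sqrt 2 := by
      rw [div_le_iff₀ hB, ← Real.sqrt_mul (by norm_num)]
      exact Real.sqrt_le_sqrt (by nlinarith [sq_nonneg t])
    have heq : Real.sqrt (2 + t ^ 2) ^ α * Real.sqrt (1 + t ^ 2) ^ (-α)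
        = (Real.sqrt (2 + t ^ 2) / Real.sqrt (1 + t ^ 2)) ^ α := by
      rw [Real.div_rpow hA hB.le, Real.rpow_neg hB.le, div_eq_mul_inv]
    rw [heq]
    calc (Real.sqrt (2 + t ^ 2) / Real.sqrt (1 + t ^ 2)) ^ α
        ≤ Real.sqrt 2 ^ α := Real.rpow_le_rpow (by positivity) hdiv hα0
      _ ≤ Real.sqrt 2 ^ (1:ℝ) := Real.rpow_le_rpow_of_exponent_le
          (by nlinarith [Real.sq_sqrt (by norm_num : (0:ℝ) ≤ 2), Real.sqrt_nonneg 2]) hα1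
      _ = Real.sqrt 2 := Real.rpow_one _
      _ ≤ 2 := by
          nlinarith [Real.sq_sqrt (by norm_num : (0:ℝ) ≤ 2), Real.sqrt_nonneg 2]
  -- assemble
  have split_k : jb k t ^ σ = jb k t ^ (σ - α) * jb k t ^ α := by
    rw [← Real.rpow_add hJk]; ring_nf
  have split_l : jb ℓ t ^ (σ - α) = jb ℓ t ^ σ * jb ℓ t ^ (-α) := by
    rw [← Real.rpow_add hJl]; ring_nf
  have h2σ : (2:ℝ) ^ (σ - α) * 2 ≤ 2 ^ (σ + 1) := by
    have : (2:ℝ) ^ (σ - α) ≤ 2 ^ σ := Real.rpow_le_rpow_of_exponent_le (by norm_num)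
      (by linarith)
    have h21 : (2:ℝ) ^ (σ + 1) = 2 ^ σ * 2 := by
      rw [Real.rpow_add (by norm_num), Real.rpow_one]
    nlinarith
  calc jb k t ^ σ * knorm k ^ (-α)
      = jb k t ^ (σ - α) * (jb k t ^ α * knorm k ^ (-α)) := by rw [split_k]; ring
    _ ≤ (2 ^ (σ - α) * jb ℓ t ^ (σ - α)) * Real.sqrt (2 + t ^ 2) ^ α := by
        refine mul_le_mul F1 F2 (by positivity) (by positivity)
    _ = 2 ^ (σ - α) * (jb ℓ t ^ σ * (jb ℓ t ^ (-α) * Real.sqrt (2 + t ^ 2) ^ α)) := by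
        rw [split_l]; ring
    _ ≤ 2 ^ (σ - α) * (jb ℓ t ^ σ * ((Real.sqrt (1 + t ^ 2) ^ (-α) * knorm ℓ ^ (-α))
          * Real.sqrt (2 + t ^ 2) ^ α)) := by
        have := mul_le_mul_of_nonneg_right F3 (Real.rpow_nonneg hA α)
        have h' := mul_le_mul_of_nonneg_left this (Real.rpow_nonneg hJl.le σ)
        exact mul_le_mul_of_nonneg_left h' (by positivity)
    _ = (Real.sqrt (2 + t ^ 2) ^ α * Real.sqrt (1 + t ^ 2) ^ (-α)) * 2 ^ (σ - α)
          * (jb ℓ t ^ σ * knorm ℓ ^ (-α)) := by ring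
    _ ≤ 2 * 2 ^ (σ - α) * (jb ℓ t ^ σ * knorm ℓ ^ (-α)) := by
        refine mul_le_mul_of_nonneg_right (mul_le_mul_of_nonneg_right hConst (by positivity)) ?_
        positivity
    _ ≤ 2 ^ (σ + 1) * (jb ℓ t ^ σ * knorm ℓ ^ (-α)) := by
        refine mul_le_mul_of_nonneg_right ?_ (by positivity)
        nlinarith [h2σ]

lemma key_case {γ σ α z t : ℝ} (hγ0 : 0 < γ) (hγ1 : γ ≤ 1) (hα0 : 0 ≤ α) (hα1 : α ≤ 1)
    (hασ : α ≤ σ) (hz : 0 ≤ z) {ℓ m : Fin 3 → ℤ} (hl : ℓ ≠ 0) (hm : m ≠ 0)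
    (hlm0 : ℓ + m ≠ 0) (hord : jb m t ≤ jb ℓ t) :
    W γ σ α z t (ℓ + m) ≤ 2 ^ (σ + 1) * jb m t ^ (α - σ) * (W γ σ α z t ℓ * W γ σ α z t m) := by
  have hJk := jb_pos (ℓ + m) t
  have hJl := jb_pos ℓ t
  have hJm := jb_pos m t
  have hNm := knorm_pos hm
  have hJ2 : jb (ℓ + m) t ≤ 2 * jb ℓ t := (jb_triangle ℓ m t).trans (by linarith)
  have hexp : Real.exp (z * jb (ℓ + m) t ^ γ)
      ≤ Real.exp (z * jb ℓ t ^ γ) * Real.exp (z * jb m t ^ γ) := by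
    rw [← Real.exp_add]
    refine Real.exp_le_exp.mpr ?_
    have h1 : jb (ℓ + m) t ^ γ ≤ (jb ℓ t + jb m t) ^ γ :=
      Real.rpow_le_rpow hJk.le (jb_triangle ℓ m t) hγ0.le
    have h2 : (jb ℓ t + jb m t) ^ γ ≤ jb ℓ t ^ γ + jb m t ^ γ :=
      rpow_subadd hJl.le hJm.le hγ0.le hγ1
    have := mul_le_mul_of_nonneg_left (h1.trans h2) hz
    linarith [this]
  have hpow := power_bound hα0 hα1 hασ hlm0 hl hJ2
  have hone : 1 ≤ jb m t ^ (α - σ) * (jb m t ^ σ * knorm m ^ (-α)) := by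
    have heq : jb m t ^ (α - σ) * jb m t ^ σ = jb m t ^ α := by
      rw [← Real.rpow_add hJm]; ring_nf
    have h1 : knorm m ^ α ≤ jb m t ^ α :=
      Real.rpow_le_rpow hNm.le (knorm_le_jb m t) hα0
    have h2 : knorm m ^ α * knorm m ^ (-α) = 1 := by
      rw [← Real.rpow_add hNm]; simp
    calc (1:ℝ) = knorm m ^ α * knorm m ^ (-α) := h2.symm
      _ ≤ jb m t ^ α * knorm m ^ (-α) :=
          mul_le_mul_of_nonneg_right h1 (Real.rpow_nonneg hNm.le _)
      _ = jb m t ^ (α - σ) * (jb m t ^ σ * knorm m ^ (-α)) := by rw [← mul_assoc, heq]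
  have hWk : W γ σ α z t (ℓ + m)
      = Real.exp (z * jb (ℓ + m) t ^ γ) * (jb (ℓ + m) t ^ σ * knorm (ℓ + m) ^ (-α)) := by
    unfold W; ring
  rw [hWk]
  have step1 : Real.exp (z * jb (ℓ + m) t ^ γ) * (jb (ℓ + m) t ^ σ * knorm (ℓ + m) ^ (-α))
      ≤ (Real.exp (z * jb ℓ t ^ γ) * Real.exp (z * jb m t ^ γ))
        * (2 ^ (σ + 1) * (jb ℓ t ^ σ * knorm ℓ ^ (-α))) := by
    refine mul_le_mul hexp hpow ?_ (by positivity)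
    have := knorm_pos hlm0
    positivity
  refine step1.trans ?_
  have hNl := knorm_pos hl
  calc (Real.exp (z * jb ℓ t ^ γ) * Real.exp (z * jb m t ^ γ))
        * (2 ^ (σ + 1) * (jb ℓ t ^ σ * knorm ℓ ^ (-α)))
      = (2 ^ (σ + 1) * (W γ σ α z t ℓ) * Real.exp (z * jb m t ^ γ)) * 1 := by
        unfold W; ring
    _ ≤ (2 ^ (σ + 1) * (W γ σ α z t ℓ) * Real.exp (z * jb m t ^ γ))
        * (jb m t ^ (α - σ) * (jb m t ^ σ * knorm m ^ (-α))) := by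
        refine mul_le_mul_of_nonneg_left hone ?_
        have := W_pos (γ := γ) (σ := σ) (α := α) (z := z) (t := t) hl
        positivity
    _ = 2 ^ (σ + 1) * jb m t ^ (α - σ) * (W γ σ α z t ℓ * W γ σ α z t m) := by
        unfold W; ring

lemma key {γ σ α z t : ℝ} (hγ0 : 0 < γ) (hγ1 : γ ≤ 1) (hα0 : 0 ≤ α) (hα1 : α ≤ 1)
    (hασ : α ≤ σ) (hz : 0 ≤ z) {k ℓ m : Fin 3 → ℤ} (hk : k ≠ 0) (hl : ℓ ≠ 0) (hm : m ≠ 0)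
    (hklm : k = ℓ + m) :
    W γ σ α z t k ≤ 2 ^ (σ + 1) * (jb ℓ t ^ (α - σ) + jb m t ^ (α - σ))
      * (W γ σ α z t ℓ * W γ σ α z t m) := by
  subst hklm
  have hWl := W_pos (γ := γ) (σ := σ) (α := α) (z := z) (t := t) hl
  have hWm := W_pos (γ := γ) (σ := σ) (α := α) (z := z) (t := t) hm
  have hJl := jb_pos ℓ t
  have hJm := jb_pos m t
  rcases le_total (jb m t) (jb ℓ t) with hord | hord
  · refine (key_case hγ0 hγ1 hα0 hα1 hασ hz hl hm hk hord).trans ?_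
    refine mul_le_mul_of_nonneg_right ?_ (by positivity)
    refine mul_le_mul_of_nonneg_left ?_ (by positivity)
    have : (0:ℝ) ≤ jb ℓ t ^ (α - σ) := Real.rpow_nonneg hJl.le _
    linarith
  · have hk' : m + ℓ ≠ 0 := by rwa [add_comm]
    have h := key_case hγ0 hγ1 hα0 hα1 hασ hz hm hl hk' hord
    rw [add_comm m ℓ] at h
    refine h.trans ?_
    calc 2 ^ (σ + 1) * jb ℓ t ^ (α - σ) * (W γ σ α z t m * W γ σ α z t ℓ)
        = 2 ^ (σ + 1) * jb ℓ t ^ (α - σ) * (W γ σ α z t ℓ * W γ σ α z t m) := by ring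
      _ ≤ 2 ^ (σ + 1) * (jb ℓ t ^ (α - σ) + jb m t ^ (α - σ))
          * (W γ σ α z t ℓ * W γ σ α z t m) := by
          refine mul_le_mul_of_nonneg_right ?_ (by positivity)
          refine mul_le_mul_of_nonneg_left ?_ (by positivity)
          have : (0:ℝ) ≤ jb m t ^ (α - σ) := Real.rpow_nonneg hJm.le _
          linarith

end ConvAux

namespace ConvAux

lemma summable_one_add_sq {e : ℝ} (he : e < -(1/2)) :
    Summable fun n : ℤ => (1 + (n:ℝ) ^ 2) ^ e := by
  have hb : 1 < -(2 * e) := by linarith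
  have h1 : Summable fun n : ℤ => |(n:ℝ)| ^ (-(-(2 * e))) := Real.summable_abs_int_rpow hb
  simp only [neg_neg] at h1
  have hind : Summable fun n : ℤ => if n = 0 then (1:ℝ) else 0 := by
    refine summable_of_ne_finset_zero (s := {0}) fun n hn => ?_
    simp only [Finset.mem_singleton] at hn
    simp [hn]
  refine Summable.of_nonneg_of_le (fun n => by positivity) (fun n => ?_) (h1.add hind)
  rcases eq_or_ne n 0 with rfl | hn
  · simp only [Int.cast_zero, ne_eq, OfNat.ofNat_ne_zero, not_false_eq_true, zero_pow,
      add_zero, Real.one_rpow, abs_zero, if_true]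
    rw [Real.zero_rpow (by linarith)]
    norm_num
  · have h2 : ((n:ℝ) ^ 2) ^ e = |(n:ℝ)| ^ (2 * e) := by
      rw [← sq_abs, ← Real.rpow_natCast |(n:ℝ)| 2, ← Real.rpow_mul (abs_nonneg _)]
      norm_num
    have h3 : (1 + (n:ℝ) ^ 2) ^ e ≤ ((n:ℝ) ^ 2) ^ e := by
      have hn' : (0:ℝ) < (n:ℝ) ^ 2 := by
        have : (n:ℝ) ≠ 0 := Int.cast_ne_zero.mpr hn
        positivity
      exact Real.rpow_le_rpow_of_nonpos hn' (by linarith) (by linarith)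
    simp only [hn, if_false, add_zero]
    rw [← h2]; exact h3

lemma summable_pi3 {g : ℤ → ℝ} (hg : Summable g) (h0 : ∀ n, 0 ≤ g n) :
    Summable fun ℓ : Fin 3 → ℤ => g (ℓ 0) * (g (ℓ 1) * g (ℓ 2)) := by
  have h2 : Summable fun p : ℤ × ℤ => g p.1 * g p.2 :=
    hg.mul_of_nonneg hg h0 h0
  have h3 : Summable fun p : ℤ × (ℤ × ℤ) => g p.1 * (g p.2.1 * g p.2.2) :=
    hg.mul_of_nonneg h2 h0 fun p => mul_nonneg (h0 _) (h0 _)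
  let e : (Fin 3 → ℤ) ≃ ℤ × (ℤ × ℤ) :=
    (Fin.consEquiv fun _ => ℤ).symm.trans (Equiv.prodCongr (Equiv.refl ℤ) (finTwoArrowEquiv ℤ))
  have h4 := (e.summable_iff
    (f := fun p : ℤ × (ℤ × ℤ) => g p.1 * (g p.2.1 * g p.2.2))).mpr h3
  refine h4.congr fun ℓ => ?_
  simp [e, Fin.consEquiv, finTwoArrowEquiv, Function.comp, Fin.tail,
    Fin.succ_zero_eq_one, Fin.succ_one_eq_two]

lemma summable_jb_rpow {e : ℝ} (he : e < -3) (t : ℝ) :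
    Summable fun ℓ : Fin 3 → ℤ => jb ℓ t ^ e := by
  have he6 : e / 6 < -(1/2) := by linarith
  set g : ℤ → ℝ := fun n => (1 + (n:ℝ) ^ 2) ^ (e / 6) with hg_def
  have hg : Summable g := summable_one_add_sq he6
  have hg0 : ∀ n, 0 ≤ g n := fun n => Real.rpow_nonneg (by positivity) _
  refine Summable.of_nonneg_of_le (fun ℓ => Real.rpow_nonneg (jb_pos ℓ t).le _)
    (fun ℓ => ?_) (summable_pi3 hg hg0)
  have hQ : Q ℓ = ((ℓ 0 : ℝ)) ^ 2 + ((ℓ 1 : ℝ)) ^ 2 + ((ℓ 2 : ℝ)) ^ 2 := by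
    unfold Q; rw [Fin.sum_univ_three]
  have hA : (0:ℝ) < 1 + Q ℓ := by
    have := Q_nonneg ℓ; linarith
  have step1 : jb ℓ t ^ e ≤ (1 + Q ℓ) ^ (e / 2) := by
    have h1 : jb ℓ t ^ e ≤ Real.sqrt (1 + Q ℓ) ^ e :=
      Real.rpow_le_rpow_of_nonpos (Real.sqrt_pos.mpr hA) (jb_zero_le ℓ t) (by linarith)
    have h2 : Real.sqrt (1 + Q ℓ) ^ e = (1 + Q ℓ) ^ (e / 2) := by
      rw [Real.sqrt_eq_rpow, ← Real.rpow_mul hA.le]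
      congr 1; ring
    rwa [h2] at h1
  have hP : (0:ℝ) < (1 + ((ℓ 0 : ℝ)) ^ 2) * ((1 + ((ℓ 1 : ℝ)) ^ 2) * (1 + ((ℓ 2 : ℝ)) ^ 2)) := by
    positivity
  have hPle : (1 + ((ℓ 0 : ℝ)) ^ 2) * ((1 + ((ℓ 1 : ℝ)) ^ 2) * (1 + ((ℓ 2 : ℝ)) ^ 2))
      ≤ (1 + Q ℓ) ^ (3:ℕ) := by
    rw [hQ]
    set x := ((ℓ 0 : ℝ)) ^ 2 with hx
    set y := ((ℓ 1 : ℝ)) ^ 2 with hy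
    set w := ((ℓ 2 : ℝ)) ^ 2 with hw
    have hx0 : 0 ≤ x := sq_nonneg _
    have hy0 : 0 ≤ y := sq_nonneg _
    have hw0 : 0 ≤ w := sq_nonneg _
    have h1 : (1:ℝ) + x ≤ 1 + (x + y + w) := by linarith
    have h2 : (1:ℝ) + y ≤ 1 + (x + y + w) := by linarith
    have h3 : (1:ℝ) + w ≤ 1 + (x + y + w) := by linarith
    have hbig : (1 + y) * (1 + w) ≤ (1 + (x + y + w)) * (1 + (x + y + w)) :=
      mul_le_mul h2 h3 (by linarith) (by linarith)
    calc (1 + x) * ((1 + y) * (1 + w))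
        ≤ (1 + (x + y + w)) * ((1 + (x + y + w)) * (1 + (x + y + w))) :=
          mul_le_mul h1 hbig (by nlinarith) (by linarith)
      _ = (1 + (x + y + w)) ^ (3:ℕ) := by ring
  have step2 : (1 + Q ℓ) ^ (e / 2) ≤ g (ℓ 0) * (g (ℓ 1) * g (ℓ 2)) := by
    have h3 := Real.rpow_le_rpow_of_nonpos hP hPle (by linarith : e / 6 ≤ 0)
    have h4 : (((1 + Q ℓ) ^ (3:ℕ) : ℝ)) ^ (e / 6) = (1 + Q ℓ) ^ (e / 2) := by
      rw [← Real.rpow_natCast (1 + Q ℓ) 3, ← Real.rpow_mul hA.le]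
      congr 1
      push_cast
      ring
    have h5 : ((1 + ((ℓ 0 : ℝ)) ^ 2) * ((1 + ((ℓ 1 : ℝ)) ^ 2) * (1 + ((ℓ 2 : ℝ)) ^ 2))) ^ (e / 6)
        = g (ℓ 0) * (g (ℓ 1) * g (ℓ 2)) := by
      rw [Real.mul_rpow (by positivity) (by positivity),
        Real.mul_rpow (by positivity) (by positivity)]
    rw [← h4, ← h5]
    exact h3
  exact step1.trans step2

lemma jb_zero (ℓ : Fin 3 → ℤ) : jb ℓ 0 = Real.sqrt (1 + Q ℓ) := by
  rw [jb_eq]; norm_num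

lemma jb_rpow_le_t_zero {e : ℝ} (he : e ≤ 0) (ℓ : Fin 3 → ℤ) (t : ℝ) :
    jb ℓ t ^ e ≤ jb ℓ 0 ^ e := by
  refine Real.rpow_le_rpow_of_nonpos (jb_pos ℓ 0) ?_ he
  rw [jb_zero]
  exact jb_zero_le ℓ t

lemma W_ge_jb {γ σ α z t : ℝ} (hα0 : 0 ≤ α) (hz : 0 ≤ z) {ℓ : Fin 3 → ℤ} (hl : ℓ ≠ 0) :
    jb ℓ t ^ (σ - α) ≤ W γ σ α z t ℓ := by
  have hJ := jb_pos ℓ t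
  have hN := knorm_pos hl
  have h1 : (1:ℝ) ≤ Real.exp (z * jb ℓ t ^ γ) :=
    Real.one_le_exp (mul_nonneg hz (Real.rpow_nonneg hJ.le _))
  have h2 : jb ℓ t ^ (-α) ≤ knorm ℓ ^ (-α) :=
    Real.rpow_le_rpow_of_nonpos hN (knorm_le_jb ℓ t) (neg_nonpos.mpr hα0)
  have h3 : jb ℓ t ^ (σ - α) = jb ℓ t ^ σ * jb ℓ t ^ (-α) := by
    rw [← Real.rpow_add hJ]; ring_nf
  unfold W
  calc jb ℓ t ^ (σ - α) = 1 * (jb ℓ t ^ σ * jb ℓ t ^ (-α)) := by rw [h3]; ring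
    _ ≤ Real.exp (z * jb ℓ t ^ γ) * (jb ℓ t ^ σ * knorm ℓ ^ (-α)) := by
        refine mul_le_mul h1 ?_ (by positivity) (Real.exp_nonneg _)
        exact mul_le_mul_of_nonneg_left h2 (Real.rpow_nonneg hJ.le σ)
    _ = Real.exp (z * jb ℓ t ^ γ) * jb ℓ t ^ σ * knorm ℓ ^ (-α) := by ring

end ConvAux

open ConvAux

/-- Convolution estimate for the generator function `F`:
`F[φψ](t,z) ≤ C · F[φ](t,z) · F[ψ](t,z)` at the level of Fourier coefficients. -/
theorem convolution_estimate {γ σ α : ℝ} (hγ0 : 0 < γ) (hγ1 : γ ≤ 1)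
    (hσ : 3 < σ) (hα0 : 0 ≤ α) (hα : α < 1 / 2) (hσα : 3 < σ - α) :
    ∃ C : ℝ, 0 < C ∧ ∀ z t : ℝ, 0 ≤ z → 0 ≤ t →
      ∀ (a b : (Fin 3 → ℤ) → ℂ) (Ma Mb : ℝ),
        a 0 = 0 → b 0 = 0 →
        (∀ ℓ : Fin 3 → ℤ, ℓ ≠ 0 → W γ σ α z t ℓ * ‖a ℓ‖ ≤ Ma) →
        (∀ ℓ : Fin 3 → ℤ, ℓ ≠ 0 → W γ σ α z t ℓ * ‖b ℓ‖ ≤ Mb) →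
        (∀ k : Fin 3 → ℤ, Summable (fun ℓ : Fin 3 → ℤ => ‖a ℓ * b (k - ℓ)‖)) ∧
        (∀ k : Fin 3 → ℤ, k ≠ 0 →
          W γ σ α z t k * ‖∑' ℓ : Fin 3 → ℤ, a ℓ * b (k - ℓ)‖ ≤ C * Ma * Mb) := by
  have hα1 : α ≤ 1 := by linarith
  have hασ : α ≤ σ := by linarith
  have hexp_neg : α - σ < -3 := by linarith
  -- the uniform sum
  have hsum0 : Summable (fun ℓ : Fin 3 → ℤ => jb ℓ 0 ^ (α - σ)) := summable_jb_rpow hexp_neg 0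
  set S₀ : ℝ := ∑' ℓ : Fin 3 → ℤ, jb ℓ 0 ^ (α - σ) with hS0_def
  have hS0_nonneg : 0 ≤ S₀ :=
    tsum_nonneg fun ℓ => Real.rpow_nonneg (jb_pos ℓ 0).le _
  set K : ℝ := 2 ^ (σ + 1) with hK_def
  have hKpos : 0 < K := Real.rpow_pos_of_pos (by norm_num) _
  refine ⟨K * (2 * S₀) + 1, by nlinarith, ?_⟩
  intro z t hz ht a b Ma Mb ha0 hb0 hMa hMb
  -- nonnegativity of Ma, Mb
  have hone_ne : (fun _ : Fin 3 => (1:ℤ)) ≠ 0 := by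
    intro h
    have := congrFun h 0
    simp at this
  have hMa0 : 0 ≤ Ma := by
    refine le_trans ?_ (hMa _ hone_ne)
    exact mul_nonneg (W_pos hone_ne).le (norm_nonneg _)
  have hMb0 : 0 ≤ Mb := by
    refine le_trans ?_ (hMb _ hone_ne)
    exact mul_nonneg (W_pos hone_ne).le (norm_nonneg _)
  -- coefficient bounds
  have habs : ∀ (f : (Fin 3 → ℤ) → ℂ) (M : ℝ),
      (∀ ℓ : Fin 3 → ℤ, ℓ ≠ 0 → W γ σ α z t ℓ * ‖f ℓ‖ ≤ M) →
      ∀ ℓ : Fin 3 → ℤ, ℓ ≠ 0 → ‖f ℓ‖ ≤ M * jb ℓ t ^ (α - σ) := by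
    intro f M hM ℓ hl
    have hW := W_ge_jb (γ := γ) (σ := σ) (z := z) (t := t) hα0 hz hl
    have hJ : (0:ℝ) < jb ℓ t ^ (σ - α) := Real.rpow_pos_of_pos (jb_pos ℓ t) _
    have h1 : jb ℓ t ^ (σ - α) * ‖f ℓ‖ ≤ M :=
      le_trans (mul_le_mul_of_nonneg_right hW (norm_nonneg _)) (hM ℓ hl)
    have h2 : jb ℓ t ^ (α - σ) = (jb ℓ t ^ (σ - α))⁻¹ := by
      rw [show α - σ = -(σ - α) by ring, Real.rpow_neg (jb_pos ℓ t).le]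
    rw [h2, ← div_eq_mul_inv, le_div_iff₀ hJ, mul_comm]
    exact h1
  have habs_a := habs a Ma hMa
  have habs_b := habs b Mb hMb
  -- summability
  have hsum_t : Summable (fun ℓ : Fin 3 → ℤ => jb ℓ t ^ (α - σ)) := summable_jb_rpow hexp_neg t
  have hptb : ∀ k ℓ : Fin 3 → ℤ, ‖a ℓ * b (k - ℓ)‖ ≤ (Ma * Mb) * jb ℓ t ^ (α - σ) := by
    intro k ℓ
    rcases eq_or_ne ℓ 0 with rfl | hl
    · rw [ha0]
      simp only [zero_mul, norm_zero]
      exact mul_nonneg (mul_nonneg hMa0 hMb0) (Real.rpow_nonneg (jb_pos _ t).le _)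
    rcases eq_or_ne (k - ℓ) 0 with hm | hm
    · rw [hm, hb0, mul_zero, norm_zero]
      exact mul_nonneg (mul_nonneg hMa0 hMb0) (Real.rpow_nonneg (jb_pos ℓ t).le _)
    · rw [norm_mul]
      have h1 := habs_a ℓ hl
      have h2 : ‖b (k - ℓ)‖ ≤ Mb := by
        refine (habs_b _ hm).trans ?_
        have h3 : jb (k - ℓ) t ^ (α - σ) ≤ 1 :=
          Real.rpow_le_one_of_one_le_of_nonpos (one_le_jb _ t) (by linarith)
        nlinarith [h3, hMb0]
      calc ‖a ℓ‖ * ‖b (k - ℓ)‖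
          ≤ (Ma * jb ℓ t ^ (α - σ)) * Mb :=
            mul_le_mul h1 h2 (norm_nonneg _)
              (mul_nonneg hMa0 (Real.rpow_nonneg (jb_pos ℓ t).le _))
        _ = (Ma * Mb) * jb ℓ t ^ (α - σ) := by ring
  have hsummable : ∀ k : Fin 3 → ℤ,
      Summable fun ℓ : Fin 3 → ℤ => ‖a ℓ * b (k - ℓ)‖ := by
    intro k
    exact Summable.of_nonneg_of_le (fun ℓ => norm_nonneg _) (hptb k)
      (hsum_t.mul_left (Ma * Mb))
  refine ⟨hsummable, ?_⟩
  intro k hk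
  have hWk_pos : 0 < W γ σ α z t k := W_pos hk
  have hsum_shift : Summable (fun ℓ : Fin 3 → ℤ => jb (k - ℓ) t ^ (α - σ)) := by
    have h := ((Equiv.subLeft k).summable_iff
      (f := fun x : Fin 3 → ℤ => jb x t ^ (α - σ))).mpr hsum_t
    exact h.congr fun ℓ => rfl
  have hG : ∀ ℓ : Fin 3 → ℤ, W γ σ α z t k * ‖a ℓ * b (k - ℓ)‖
      ≤ (K * Ma * Mb) * (jb ℓ t ^ (α - σ) + jb (k - ℓ) t ^ (α - σ)) := by
    intro ℓ
    have hRnn : 0 ≤ (K * Ma * Mb) * (jb ℓ t ^ (α - σ) + jb (k - ℓ) t ^ (α - σ)) :=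
      mul_nonneg (mul_nonneg (mul_nonneg hKpos.le hMa0) hMb0)
        (add_nonneg (Real.rpow_nonneg (jb_pos ℓ t).le _)
          (Real.rpow_nonneg (jb_pos _ t).le _))
    rcases eq_or_ne ℓ 0 with rfl | hl
    · rw [ha0]
      simp only [zero_mul, norm_zero, mul_zero]
      exact hRnn
    rcases eq_or_ne (k - ℓ) 0 with hm | hm
    · have hb' : b (k - ℓ) = 0 := by rw [hm]; exact hb0
      rw [hb', mul_zero, norm_zero, mul_zero]
      exact hRnn
    · have hkey := key (t := t) hγ0 hγ1 hα0 hα1 hασ hz hk hl hm (by ring : k = ℓ + (k - ℓ))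
      rw [norm_mul]
      calc W γ σ α z t k * (‖a ℓ‖ * ‖b (k - ℓ)‖)
          ≤ (2 ^ (σ + 1) * (jb ℓ t ^ (α - σ) + jb (k - ℓ) t ^ (α - σ))
              * (W γ σ α z t ℓ * W γ σ α z t (k - ℓ)))
              * (‖a ℓ‖ * ‖b (k - ℓ)‖) :=
            mul_le_mul_of_nonneg_right hkey
              (mul_nonneg (norm_nonneg _) (norm_nonneg _))
        _ = (K * (jb ℓ t ^ (α - σ) + jb (k - ℓ) t ^ (α - σ)))
              * ((W γ σ α z t ℓ * ‖a ℓ‖)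
                * (W γ σ α z t (k - ℓ) * ‖b (k - ℓ)‖)) := by
            rw [hK_def]; ring
        _ ≤ (K * (jb ℓ t ^ (α - σ) + jb (k - ℓ) t ^ (α - σ))) * (Ma * Mb) := by
            refine mul_le_mul_of_nonneg_left ?_ ?_
            · refine mul_le_mul (hMa ℓ hl) (hMb _ hm)
                (mul_nonneg (W_pos hm).le (norm_nonneg _)) hMa0
            · exact mul_nonneg hKpos.le (add_nonneg (Real.rpow_nonneg (jb_pos ℓ t).le _)
                (Real.rpow_nonneg (jb_pos _ t).le _))
        _ = (K * Ma * Mb) * (jb ℓ t ^ (α - σ) + jb (k - ℓ) t ^ (α - σ)) := by ring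
  have hS_le : ∑' ℓ : Fin 3 → ℤ, jb ℓ t ^ (α - σ) ≤ S₀ := by
    rw [hS0_def]
    exact Summable.tsum_le_tsum (fun ℓ => jb_rpow_le_t_zero (by linarith) ℓ t) hsum_t hsum0
  have hshift_eq : ∑' ℓ : Fin 3 → ℤ, jb (k - ℓ) t ^ (α - σ)
      = ∑' ℓ : Fin 3 → ℤ, jb ℓ t ^ (α - σ) :=
    (Equiv.subLeft k).tsum_eq (fun x : Fin 3 → ℤ => jb x t ^ (α - σ))
  have hGsum : Summable (fun ℓ : Fin 3 → ℤ =>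
      (K * Ma * Mb) * (jb ℓ t ^ (α - σ) + jb (k - ℓ) t ^ (α - σ))) :=
    (hsum_t.add hsum_shift).mul_left _
  have hWabs_sum : Summable (fun ℓ : Fin 3 → ℤ =>
      W γ σ α z t k * ‖a ℓ * b (k - ℓ)‖) := (hsummable k).mul_left _
  have htsum_abs : ‖∑' ℓ : Fin 3 → ℤ, a ℓ * b (k - ℓ)‖
      ≤ ∑' ℓ : Fin 3 → ℤ, ‖a ℓ * b (k - ℓ)‖ := by
    have h := norm_tsum_le_tsum_norm (f := fun ℓ : Fin 3 → ℤ => a ℓ * b (k - ℓ))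
      (hsummable k)
    simpa using h
  calc W γ σ α z t k * ‖∑' ℓ : Fin 3 → ℤ, a ℓ * b (k - ℓ)‖
      ≤ W γ σ α z t k * ∑' ℓ : Fin 3 → ℤ, ‖a ℓ * b (k - ℓ)‖ :=
        mul_le_mul_of_nonneg_left htsum_abs hWk_pos.le
    _ = ∑' ℓ : Fin 3 → ℤ, W γ σ α z t k * ‖a ℓ * b (k - ℓ)‖ := tsum_mul_left.symm
    _ ≤ ∑' ℓ : Fin 3 → ℤ, (K * Ma * Mb) * (jb ℓ t ^ (α - σ) + jb (k - ℓ) t ^ (α - σ)) :=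
        Summable.tsum_le_tsum hG hWabs_sum hGsum
    _ = (K * Ma * Mb) * ((∑' ℓ : Fin 3 → ℤ, jb ℓ t ^ (α - σ))
          + ∑' ℓ : Fin 3 → ℤ, jb (k - ℓ) t ^ (α - σ)) := by
        rw [tsum_mul_left, Summable.tsum_add hsum_t hsum_shift]
    _ ≤ (K * Ma * Mb) * (S₀ + S₀) := by
        refine mul_le_mul_of_nonneg_left ?_ (mul_nonneg (mul_nonneg hKpos.le hMa0) hMb0)
        rw [hshift_eq]
        linarith
    _ ≤ (K * (2 * S₀) + 1) * Ma * Mb := by nlinarith [mul_nonneg hMa0 hMb0]
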